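/- Let d ∈ ℂ with d ∉ {0,1} (e.g., an integer d ≥ 2). A nonzero 2×2 complex matrix A forms a good pair with ζ ↦ ζ^d (i.e., the Jacobian of x ↦ x + (Ax)^d is identically 1) if and only if there exist (s,t) ∈ ℂ², not both zero, such that A = [[s t^d, −s^{d+1}], [t^{d+1}, −s^d t]] up to nonzero scalar multiple of the row interpretation; moreover for such A the inverse of f(x) = x + (Ax)^d is x = f − (Af)^d. -/

import Mathlib

open Matrix BigOperators

/-- Jacobian determinant of a map `f : ℂ^ι → ℂ^ι` at `x`. -/
noncomputable def jacDet {ι : Type*} [Fintype ι] [DecidableEq ι]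
    (f : (ι → ℂ) → (ι → ℂ)) (x : ι → ℂ) : ℂ :=
  (LinearMap.toMatrix (Pi.basisFun ℂ ι) (Pi.basisFun ℂ ι)
    (fderiv ℂ f x).toLinearMap).det

/-- The map `x ↦ x + φ(Ax)`, with `φ` applied entrywise. -/
noncomputable def phiMap {ι : Type*} [Fintype ι] (A : Matrix ι ι ℂ) (φ : ℂ → ℂ)
    (x : ι → ℂ) : ι → ℂ :=
  fun j => x j + φ (A.mulVec x j)

/-- Domain of definition of `x ↦ x + φ(Ax)` for `φ` defined on `Ω`. -/
def phiDom {ι : Type*} [Fintype ι] (A : Matrix ι ι ℂ) (Ω : Set ℂ) : Set (ι → ℂ) :=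
  {x | ∀ j, A.mulVec x j ∈ Ω}

/-- `(A, φ)` is a good pair: the Jacobian of `x + φ(Ax)` is identically a nonzero constant. -/
def IsGoodPair {ι : Type*} [Fintype ι] [DecidableEq ι]
    (A : Matrix ι ι ℂ) (Ω : Set ℂ) (φ : ℂ → ℂ) : Prop :=
  ∃ c : ℂ, c ≠ 0 ∧ ∀ x ∈ phiDom A Ω, jacDet (phiMap A φ) x = c

/-- A matrix is universal if it forms a good pair with every analytic function. -/
def IsUniversal {ι : Type*} [Fintype ι] [DecidableEq ι] (A : Matrix ι ι ℂ) : Prop :=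
  ∀ (Ω : Set ℂ) (φ : ℂ → ℂ), IsOpen Ω → Ω.Nonempty → IsPreconnected Ω →
    AnalyticOn ℂ φ Ω → (phiDom A Ω).Nonempty → IsGoodPair A Ω φ

/-- The principal minor of `A` indexed by `I`. -/
noncomputable def principalMinor {ι : Type*} [DecidableEq ι] (A : Matrix ι ι ℂ)
    (I : Finset ι) : ℂ :=
  (A.submatrix (fun i : I => (i : ι)) (fun i : I => (i : ι))).det

lemma jac_eq (d : ℕ) (A : Matrix (Fin 2) (Fin 2) ℂ) (x : Fin 2 → ℂ) :
    jacDet (fun y j => y j + (A.mulVec y j) ^ d) x =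
      (1 + d * (A.mulVec x 0)^(d-1) * A 0 0) * (1 + d * (A.mulVec x 1)^(d-1) * A 1 1)
      - (d * (A.mulVec x 0)^(d-1) * A 0 1) * (d * (A.mulVec x 1)^(d-1) * A 1 0) := by
  set ℓ : Fin 2 → (Fin 2 → ℂ) →L[ℂ] ℂ := fun j =>
    LinearMap.toContinuousLinearMap ((LinearMap.proj j).comp A.mulVecLin) with hℓ
  have hℓ_apply : ∀ j v, ℓ j v = A.mulVec v j := by intro j v; simp [hℓ]
  have hmv : ∀ j, HasFDerivAt (fun y => A.mulVec y j) (ℓ j) x := by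
    intro j
    have := (ℓ j).hasFDerivAt (x := x)
    exact this.congr_of_eventuallyEq (Filter.Eventually.of_forall fun y => (hℓ_apply j y).symm)
  set F' : (Fin 2 → ℂ) →L[ℂ] (Fin 2 → ℂ) := ContinuousLinearMap.pi (fun j =>
    ContinuousLinearMap.proj j + (d * (A.mulVec x j)^(d-1)) • ℓ j) with hF'
  have hF : HasFDerivAt (fun y j => y j + (A.mulVec y j) ^ d) F' x := by
    rw [hF']
    apply hasFDerivAt_pi.2
    intro j
    have hpow : HasFDerivAt (fun y => (A.mulVec y j) ^ d)
        ((d * (A.mulVec x j)^(d-1)) • ℓ j) x := by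
      have h := (hasDerivAt_pow d (A.mulVec x j)).comp_hasFDerivAt x (hmv j)
      exact h
    exact (hasFDerivAt_apply j x).add hpow
  have hfd := hF.fderiv
  rw [jacDet, hfd]
  have hmat : ∀ j k, (LinearMap.toMatrix (Pi.basisFun ℂ (Fin 2)) (Pi.basisFun ℂ (Fin 2))
      F'.toLinearMap) j k = (if j = k then 1 else 0) + d * (A.mulVec x j)^(d-1) * A j k := by
    intro j k
    rw [LinearMap.toMatrix_apply]
    simp [hF', Pi.basisFun_apply, hℓ_apply, Matrix.mulVec_single, mul_comm, Pi.single_apply]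
  rw [Matrix.det_fin_two]
  rw [hmat 0 0, hmat 0 1, hmat 1 0, hmat 1 1]
  norm_num

lemma vanish2 (d : ℕ) (hd : 2 ≤ d) (α β : ℂ)
    (h : ∀ l : ℂ, (l ^ (d-1)) * α + (l ^ (d-1))^2 * β = 0) : α = 0 ∧ β = 0 := by
  have hμ : ∀ μ : ℂ, μ * α + μ^2 * β = 0 := by
    intro μ
    obtain ⟨l, hl⟩ := IsAlgClosed.exists_pow_nat_eq μ (n := d - 1) (by omega)
    simpa [hl] using h l
  have h1 := hμ 1
  have h2 := hμ (-1)
  constructor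
  · linear_combination (h1 - h2) / 2
  · linear_combination (h1 + h2) / 2

lemma mat_ext2 (A : Matrix (Fin 2) (Fin 2) ℂ) (w x y z : ℂ)
    (h00 : A 0 0 = w) (h01 : A 0 1 = x) (h10 : A 1 0 = y) (h11 : A 1 1 = z) :
    A = !![w, x; y, z] := by
  ext i j; fin_cases i <;> fin_cases j <;> simpa

lemma fwd (k : ℕ) (A : Matrix (Fin 2) (Fin 2) ℂ) (hA : A ≠ 0)
    (hjac : ∀ x : Fin 2 → ℂ, jacDet (fun y j => y j + (A.mulVec y j) ^ (k+2)) x = 1) :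
    ∃ s t : ℂ, ¬(s = 0 ∧ t = 0) ∧
      A = !![s * t ^ (k+2), -(s ^ (k+3)); t ^ (k+3), -(s ^ (k+2) * t)] := by
  have hd0 : ((k:ℂ) + 2) ≠ 0 := by
    intro h
    have := congrArg Complex.re h
    simp [Complex.add_re] at this
    have : (k:ℝ) ≥ 0 := Nat.cast_nonneg k
    linarith [congrArg Complex.re h, Complex.natCast_re k]
  have key : ∀ x : Fin 2 → ℂ,
      (A.mulVec x 0)^(k+1) * A 0 0 + (A.mulVec x 1)^(k+1) * A 1 1 = 0 ∧
      (A.mulVec x 0)^(k+1) * (A.mulVec x 1)^(k+1) * (A 0 0 * A 1 1 - A 0 1 * A 1 0) = 0 := by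
    intro x
    have hμ : ∀ l : ℂ, (l^(k+1)) * (((k:ℂ)+2) *
        ((A.mulVec x 0)^(k+1) * A 0 0 + (A.mulVec x 1)^(k+1) * A 1 1)) +
        (l^(k+1))^2 * (((k:ℂ)+2)^2 * ((A.mulVec x 0)^(k+1) * (A.mulVec x 1)^(k+1) *
        (A 0 0 * A 1 1 - A 0 1 * A 1 0))) = 0 := by
      intro l
      have h := hjac (l • x)
      rw [jac_eq] at h
      rw [Matrix.mulVec_smul] at h
      simp only [Pi.smul_apply, smul_eq_mul, show k + 2 - 1 = k + 1 from rfl,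
        Nat.cast_add, Nat.cast_ofNat] at h
      rw [mul_pow, mul_pow] at h
      linear_combination h
    obtain ⟨h1, h2⟩ := vanish2 (k+2) (by omega) _ _ (by
      simpa only [show k + 2 - 1 = k + 1 from rfl] using hμ)
    exact ⟨(mul_eq_zero.1 h1).resolve_left hd0,
      (mul_eq_zero.1 h2).resolve_left (pow_ne_zero 2 hd0)⟩
  have hdet : A 0 0 * A 1 1 - A 0 1 * A 1 0 = 0 := by
    by_contra hΔ
    have hu : IsUnit A.det := by
      rw [Matrix.det_fin_two]; exact isUnit_iff_ne_zero.2 hΔ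
    have hx : A.mulVec (A⁻¹.mulVec ![1,1]) = ![1,1] := by
      rw [Matrix.mulVec_mulVec, Matrix.mul_nonsing_inv _ hu, Matrix.one_mulVec]
    have h2 := (key (A⁻¹.mulVec ![1,1])).2
    rw [hx] at h2
    simp only [Matrix.cons_val_zero, Matrix.cons_val_one, Matrix.head_cons, one_pow,
      one_mul] at h2
    exact hΔ h2
  have hP : ∀ x1 x2 : ℂ, (A 0 0 * x1 + A 0 1 * x2)^(k+1) * A 0 0
      + (A 1 0 * x1 + A 1 1 * x2)^(k+1) * A 1 1 = 0 := by
    intro x1 x2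
    have := (key ![x1, x2]).1
    simpa [Matrix.mulVec, dotProduct, Fin.sum_univ_two] using this
  have h10 : A 0 0 ^ (k+2) + A 1 0 ^ (k+1) * A 1 1 = 0 := by
    have := hP 1 0
    simp only [mul_one, mul_zero, add_zero] at this
    linear_combination this
  have h01 : A 0 1 ^ (k+1) * A 0 0 + A 1 1 ^ (k+2) = 0 := by
    have := hP 0 1
    simp only [mul_one, mul_zero, zero_add] at this
    linear_combination this
  have hae : A 0 0 * A 1 1 = A 0 1 * A 1 0 := by linear_combination hdet
  by_cases haz : A 0 0 = 0
  · by_cases hez : A 1 1 = 0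
    · have hbc : A 0 1 * A 1 0 = 0 := by rw [← hae, haz]; ring
      have hne : A 0 1 ≠ 0 ∨ A 1 0 ≠ 0 := by
        by_contra h; push_neg at h
        exact hA (by ext i j; fin_cases i <;> fin_cases j <;>
          simp [haz, hez, h.1, h.2])
      rcases hne with hb0 | hc0
      · have hc0 : A 1 0 = 0 := (mul_eq_zero.1 hbc).resolve_left hb0
        obtain ⟨s, hs⟩ := IsAlgClosed.exists_pow_nat_eq (-(A 0 1)) (n := k + 3) (by omega)
        have hs0 : s ≠ 0 := by
          intro h; rw [h, zero_pow (by omega : k + 3 ≠ 0)] at hs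
          exact hb0 (by linear_combination hs)
        refine ⟨s, 0, fun h => hs0 h.1, mat_ext2 A _ _ _ _ ?_ ?_ ?_ ?_⟩
        · rw [haz, zero_pow (by omega : k + 2 ≠ 0)]; ring
        · linear_combination hs
        · rw [hc0, zero_pow (by omega : k + 3 ≠ 0)]
        · rw [hez]; ring
      · have hb0 : A 0 1 = 0 := (mul_eq_zero.1 hbc).resolve_right hc0
        obtain ⟨t, ht⟩ := IsAlgClosed.exists_pow_nat_eq (A 1 0) (n := k + 3) (by omega)
        have ht0 : t ≠ 0 := by
          intro h; rw [h, zero_pow (by omega : k + 3 ≠ 0)] at ht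
          exact hc0 ht.symm
        refine ⟨0, t, fun h => ht0 h.2, mat_ext2 A _ _ _ _ ?_ ?_ ?_ ?_⟩
        · rw [haz]; ring
        · rw [hb0, zero_pow (by omega : k + 3 ≠ 0)]; ring
        · rw [ht]
        · rw [hez, zero_pow (by omega : k + 2 ≠ 0)]; ring
    · exfalso
      have : A 1 1 ^ (k+2) = 0 := by rw [haz] at h01; linear_combination h01
      exact hez (pow_eq_zero_iff (by omega : k + 2 ≠ 0) |>.1 this)
  · by_cases hez : A 1 1 = 0
    · exfalso
      have : A 0 0 ^ (k+2) = 0 := by rw [hez] at h10; linear_combination h10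
      exact haz (pow_eq_zero_iff (by omega : k + 2 ≠ 0) |>.1 this)
    · have hcz : A 1 0 ≠ 0 := by
        intro h; rw [h, mul_zero] at hae
        exact mul_ne_zero haz hez hae
      obtain ⟨t, ht⟩ := IsAlgClosed.exists_pow_nat_eq (A 1 0) (n := k + 3) (by omega)
      have ht0 : t ≠ 0 := by
        intro h; rw [h, zero_pow (by omega : k + 3 ≠ 0)] at ht
        exact hcz ht.symm
      obtain ⟨s, hst⟩ : ∃ s : ℂ, s * t ^ (k+2) = A 0 0 :=
        ⟨A 0 0 / t ^ (k+2), div_mul_cancel₀ _ (pow_ne_zero _ ht0)⟩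
      have kc : A 1 1 * A 1 0 ^ (k+1) = -(A 0 0 ^ (k+2)) := by linear_combination h10
      have kb : A 0 1 * A 1 0 ^ (k+2) = -(A 0 0 ^ (k+3)) := by
        have h1 : A 0 1 * A 1 0 ^ (k+2) = A 0 0 * (A 1 1 * A 1 0 ^ (k+1)) := by
          linear_combination (-(A 1 0 ^ (k+1))) * hae
        rw [h1, kc]; ring
      have hsd1 : s ^ (k+3) * A 1 0 ^ (k+2) = A 0 0 ^ (k+3) := by
        calc s ^ (k+3) * A 1 0 ^ (k+2) = s ^ (k+3) * (t ^ (k+3)) ^ (k+2) := by rw [ht]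
          _ = (s * t ^ (k+2)) ^ (k+3) := by ring
          _ = A 0 0 ^ (k+3) := by rw [hst]
      have hb : A 0 1 = -(s ^ (k+3)) := by
        have h0 : (A 0 1 + s ^ (k+3)) * A 1 0 ^ (k+2) = 0 := by
          linear_combination kb + hsd1
        have := (mul_eq_zero.1 h0).resolve_right (pow_ne_zero _ hcz)
        linear_combination this
      have hse : s ^ (k+2) * t * A 1 0 ^ (k+1) = A 0 0 ^ (k+2) := by
        calc s ^ (k+2) * t * A 1 0 ^ (k+1) = s ^ (k+2) * t * (t ^ (k+3)) ^ (k+1) := by rw [ht]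
          _ = (s * t ^ (k+2)) ^ (k+2) := by ring
          _ = A 0 0 ^ (k+2) := by rw [hst]
      have he : A 1 1 = -(s ^ (k+2) * t) := by
        have h0 : (A 1 1 + s ^ (k+2) * t) * A 1 0 ^ (k+1) = 0 := by
          linear_combination kc + hse
        have := (mul_eq_zero.1 h0).resolve_right (pow_ne_zero _ hcz)
        linear_combination this
      exact ⟨s, t, fun h => ht0 h.2, mat_ext2 A _ _ _ _ hst.symm hb ht.symm he⟩

lemma rev (k : ℕ) (s t : ℂ) (x : Fin 2 → ℂ) :
    jacDet (fun y j => y j +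
      ((!![s * t ^ (k+2), -(s ^ (k+3)); t ^ (k+3), -(s ^ (k+2) * t)] :
        Matrix (Fin 2) (Fin 2) ℂ).mulVec y j) ^ (k+2)) x = 1 := by
  rw [jac_eq]
  obtain ⟨w, hw⟩ : ∃ w : ℂ, w = t ^ (k+2) * x 0 - s ^ (k+2) * x 1 := ⟨_, rfl⟩
  have hu : (!![s * t ^ (k+2), -(s ^ (k+3)); t ^ (k+3), -(s ^ (k+2) * t)] :
      Matrix (Fin 2) (Fin 2) ℂ).mulVec x 0 = s * w := by
    rw [hw]; simp [Matrix.mulVec, dotProduct, Fin.sum_univ_two]; ring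
  have hv : (!![s * t ^ (k+2), -(s ^ (k+3)); t ^ (k+3), -(s ^ (k+2) * t)] :
      Matrix (Fin 2) (Fin 2) ℂ).mulVec x 1 = t * w := by
    rw [hw]; simp [Matrix.mulVec, dotProduct, Fin.sum_univ_two]; ring
  have hB00 : (!![s * t ^ (k+2), -(s ^ (k+3)); t ^ (k+3), -(s ^ (k+2) * t)] :
      Matrix (Fin 2) (Fin 2) ℂ) 0 0 = s * t ^ (k+2) := by simp
  have hB01 : (!![s * t ^ (k+2), -(s ^ (k+3)); t ^ (k+3), -(s ^ (k+2) * t)] :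
      Matrix (Fin 2) (Fin 2) ℂ) 0 1 = -(s ^ (k+3)) := by simp
  have hB10 : (!![s * t ^ (k+2), -(s ^ (k+3)); t ^ (k+3), -(s ^ (k+2) * t)] :
      Matrix (Fin 2) (Fin 2) ℂ) 1 0 = t ^ (k+3) := by simp
  have hB11 : (!![s * t ^ (k+2), -(s ^ (k+3)); t ^ (k+3), -(s ^ (k+2) * t)] :
      Matrix (Fin 2) (Fin 2) ℂ) 1 1 = -(s ^ (k+2) * t) := by simp
  rw [hu, hv, hB00, hB01, hB10, hB11]
  simp only [show k + 2 - 1 = k + 1 from rfl]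
  push_cast
  ring

lemma inv_aux (k : ℕ) (s t : ℂ) (x : Fin 2 → ℂ) (j : Fin 2) :
    (!![s * t ^ (k+2), -(s ^ (k+3)); t ^ (k+3), -(s ^ (k+2) * t)] :
        Matrix (Fin 2) (Fin 2) ℂ).mulVec
      (fun i => x i + ((!![s * t ^ (k+2), -(s ^ (k+3)); t ^ (k+3), -(s ^ (k+2) * t)] :
        Matrix (Fin 2) (Fin 2) ℂ).mulVec x i) ^ (k+2)) j
    = (!![s * t ^ (k+2), -(s ^ (k+3)); t ^ (k+3), -(s ^ (k+2) * t)] :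
        Matrix (Fin 2) (Fin 2) ℂ).mulVec x j := by
  obtain ⟨w, hw⟩ : ∃ w : ℂ, w = t ^ (k+2) * x 0 - s ^ (k+2) * x 1 := ⟨_, rfl⟩
  have hu : (!![s * t ^ (k+2), -(s ^ (k+3)); t ^ (k+3), -(s ^ (k+2) * t)] :
      Matrix (Fin 2) (Fin 2) ℂ).mulVec x 0 = s * w := by
    rw [hw]; simp [Matrix.mulVec, dotProduct, Fin.sum_univ_two]; ring
  have hv : (!![s * t ^ (k+2), -(s ^ (k+3)); t ^ (k+3), -(s ^ (k+2) * t)] :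
      Matrix (Fin 2) (Fin 2) ℂ).mulVec x 1 = t * w := by
    rw [hw]; simp [Matrix.mulVec, dotProduct, Fin.sum_univ_two]; ring
  have hf : (fun i => x i + ((!![s * t ^ (k+2), -(s ^ (k+3)); t ^ (k+3), -(s ^ (k+2) * t)] :
      Matrix (Fin 2) (Fin 2) ℂ).mulVec x i) ^ (k+2)) =
      ![x 0 + (s*w)^(k+2), x 1 + (t*w)^(k+2)] := by
    funext i
    fin_cases i
    · show _ + ((!![s * t ^ (k+2), -(s ^ (k+3)); t ^ (k+3), -(s ^ (k+2) * t)] :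
        Matrix (Fin 2) (Fin 2) ℂ).mulVec x 0) ^ (k+2) = _
      rw [hu]; simp
    · show _ + ((!![s * t ^ (k+2), -(s ^ (k+3)); t ^ (k+3), -(s ^ (k+2) * t)] :
        Matrix (Fin 2) (Fin 2) ℂ).mulVec x 1) ^ (k+2) = _
      rw [hv]; simp
  rw [hf]
  fin_cases j
  · show _ = (!![s * t ^ (k+2), -(s ^ (k+3)); t ^ (k+3), -(s ^ (k+2) * t)] :
        Matrix (Fin 2) (Fin 2) ℂ).mulVec x 0
    rw [hu]
    simp only [Matrix.mulVec, dotProduct, Fin.sum_univ_two, Matrix.cons_val_zero,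
      Matrix.cons_val_one, Matrix.head_cons, Matrix.of_apply, Matrix.cons_val',
      Matrix.empty_val', Matrix.cons_val_fin_one, Matrix.head_fin_const,
      Fin.mk_zero, Fin.mk_one, Fin.isValue]
    linear_combination (-s) * hw
  · show _ = (!![s * t ^ (k+2), -(s ^ (k+3)); t ^ (k+3), -(s ^ (k+2) * t)] :
        Matrix (Fin 2) (Fin 2) ℂ).mulVec x 1
    rw [hv]
    simp only [Matrix.mulVec, dotProduct, Fin.sum_univ_two, Matrix.cons_val_zero,
      Matrix.cons_val_one, Matrix.head_cons, Matrix.of_apply, Matrix.cons_val',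
      Matrix.empty_val', Matrix.cons_val_fin_one, Matrix.head_fin_const,
      Fin.mk_zero, Fin.mk_one, Fin.isValue]
    linear_combination (-t) * hw

theorem stmt16 (d : ℕ) (hd : 2 ≤ d) (A : Matrix (Fin 2) (Fin 2) ℂ) (hA : A ≠ 0) :
    ((∀ x : Fin 2 → ℂ, jacDet (fun y j => y j + (A.mulVec y j) ^ d) x = 1) ↔
      ∃ s t : ℂ, ¬(s = 0 ∧ t = 0) ∧
        A = !![s * t ^ d, -(s ^ (d + 1)); t ^ (d + 1), -(s ^ d * t)]) ∧
    ((∀ x : Fin 2 → ℂ, jacDet (fun y j => y j + (A.mulVec y j) ^ d) x = 1) →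
      ∀ x : Fin 2 → ℂ, ∀ j,
        (x j + (A.mulVec x j) ^ d) -
          (A.mulVec (fun i => x i + (A.mulVec x i) ^ d) j) ^ d = x j) := by
  obtain ⟨k, rfl⟩ : ∃ k, d = k + 2 := ⟨d - 2, by omega⟩
  constructor
  · constructor
    · intro hjac
      obtain ⟨s, t, hst, hEq⟩ := fwd k A hA hjac
      exact ⟨s, t, hst, by rw [hEq]⟩
    · rintro ⟨s, t, hst, rfl⟩ x
      exact rev k s t x
  · intro hjac x j
    obtain ⟨s, t, hst, rfl⟩ := fwd k A hA hjac
    rw [show k + 2 + 1 = k + 3 from rfl] at *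
    rw [inv_aux k s t x j]
    ring
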